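/- Let (α, β) be a pair of real numbers for which there exist a constant C > 0 and a constant d ≥ 2 such that 1/(C b^d) ≤ |p + αq + βr| for all relatively prime integers p, q, r, where b = max(|p|, |q|, |r|). Then for every k > 1 and every s > 2, lim_{N→∞} log(Z_N(α, β, s))/(s N^k) = 0; in particular, (α, β) has a k-free energy limit equal to zero for every k > 1. -/

import Mathlib

open Matrix Filter

noncomputable section

/-- The matrix `A₀` with rows (0,0,1), (1,0,−1), (0,1,0). -/
def A0 : Matrix (Fin 3) (Fin 3) ℝ := !![0,0,1; 1,0,-1; 0,1,0]

/-- The matrix `A₁` with rows (1,0,0), (0,1,0), (−1,0,1). -/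
def A1 : Matrix (Fin 3) (Fin 3) ℝ := !![1,0,0; 0,1,0; -1,0,1]

/-- `Amat 0 = A₀`, `Amat 1 = A₁`. -/
def Amat : Fin 2 → Matrix (Fin 3) (Fin 3) ℝ := ![A0, A1]

/-- The matrix `M` with rows (0,0,1), (0,0,α), (0,0,β). -/
def Mmat (α β : ℝ) : Matrix (Fin 3) (Fin 3) ℝ := !![0,0,1; 0,0,α; 0,0,β]

/-- Hilbert–Schmidt (Hadamard) product `A*B = Tr(A Bᵀ)`. -/
def HS (A B : Matrix (Fin 3) (Fin 3) ℝ) : ℝ := (A * Bᵀ).trace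

/-- `A^I = A_{σ₁} A_{σ₂} ⋯ A_{σ_N}` for a state `I = (σ₁,…,σ_N) ∈ {0,1}^N`. -/
def AI {N : ℕ} (I : Fin N → Fin 2) : Matrix (Fin 3) (Fin 3) ℝ :=
  (List.ofFn fun i => Amat (I i)).prod

/-- The partition function `Z_N(α, β, s) = Σ_{I ∈ 𝒮_N} 1/|M*A^I|^s`. -/
def Z (N : ℕ) (α β s : ℝ) : ℝ :=
  ∑ I : Fin N → Fin 2, 1 / |HS (Mmat α β) (AI I)| ^ s

/-! ### Auxiliary integer model -/

def A0Z : Matrix (Fin 3) (Fin 3) ℤ := !![0,0,1; 1,0,-1; 0,1,0]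
def A1Z : Matrix (Fin 3) (Fin 3) ℤ := !![1,0,0; 0,1,0; -1,0,1]
def AmatZ : Fin 2 → Matrix (Fin 3) (Fin 3) ℤ := ![A0Z, A1Z]
def AIZ {N : ℕ} (I : Fin N → Fin 2) : Matrix (Fin 3) (Fin 3) ℤ :=
  (List.ofFn fun i => AmatZ (I i)).prod

lemma amat_cast (σ : Fin 2) : (AmatZ σ).map (Int.cast : ℤ → ℝ) = Amat σ := by
  fin_cases σ <;>
  · ext i j
    fin_cases i <;> fin_cases j <;> simp [AmatZ, Amat, A0Z, A1Z, A0, A1]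

lemma ai_cast {N : ℕ} (I : Fin N → Fin 2) : (AIZ I).map (Int.cast : ℤ → ℝ) = AI I := by
  have : (AIZ I).map (Int.cast : ℤ → ℝ) =
      (Int.castRingHom ℝ).mapMatrix (AIZ I) := rfl
  rw [this, AIZ, map_list_prod]
  rw [AI]
  congr 1
  simp only [List.map_ofFn]
  congr 1
  ext i : 1
  exact amat_cast (I i)

lemma ai_entry {N : ℕ} (I : Fin N → Fin 2) (i j : Fin 3) :
    AI I i j = ((AIZ I i j : ℤ) : ℝ) := by
  rw [← ai_cast]; rfl

lemma detAmatZ (σ : Fin 2) : (AmatZ σ).det = 1 := by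
  fin_cases σ <;> simp [AmatZ, A0Z, A1Z, Matrix.det_fin_three]

lemma detAIZ {N : ℕ} (I : Fin N → Fin 2) : (AIZ I).det = 1 := by
  rw [AIZ, ← Matrix.coe_detMonoidHom, MonoidHom.map_list_prod]
  rw [List.map_ofFn]
  have : (⇑detMonoidHom ∘ fun i => AmatZ (I i)) = fun _ : Fin N => (1:ℤ) := by
    funext i; exact detAmatZ (I i)
  rw [this]
  simp

lemma gcd_col {N : ℕ} (I : Fin N → Fin 2) :
    Int.gcd (AIZ I 0 2) (Int.gcd (AIZ I 1 2) (AIZ I 2 2)) = 1 := by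
  set B := AIZ I with hB
  have hdet : IsUnit B.det := by rw [detAIZ]; exact isUnit_one
  have : Invertible B := B.invertibleOfIsUnitDet hdet
  have h1 : (⅟B * B) 2 2 = 1 := by rw [invOf_mul_self]; rfl
  rw [Matrix.mul_apply, Fin.sum_univ_three] at h1
  have hdvd : (↑(Int.gcd (B 0 2) (Int.gcd (B 1 2) (B 2 2))) : ℤ) ∣ 1 := by
    rw [← h1]
    have d0 : (↑(Int.gcd (B 0 2) (Int.gcd (B 1 2) (B 2 2))) : ℤ) ∣ B 0 2 := Int.gcd_dvd_left _ _
    have d1 : (↑(Int.gcd (B 0 2) (Int.gcd (B 1 2) (B 2 2))) : ℤ) ∣ B 1 2 :=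
      dvd_trans (Int.gcd_dvd_right _ _) (Int.gcd_dvd_left _ _)
    have d2 : (↑(Int.gcd (B 0 2) (Int.gcd (B 1 2) (B 2 2))) : ℤ) ∣ B 2 2 :=
      dvd_trans (Int.gcd_dvd_right _ _) (Int.gcd_dvd_right _ _)
    exact dvd_add (dvd_add (d0.mul_left _) (d1.mul_left _)) (d2.mul_left _)
  have := Int.isUnit_iff.mp (isUnit_of_dvd_one hdvd)
  omega

lemma entry_bound : ∀ (l : List (Matrix (Fin 3) (Fin 3) ℤ)),
    (∀ A ∈ l, ∀ i, ∑ j, |A i j| ≤ 2) → ∀ i j, |l.prod i j| ≤ 2 ^ l.length := by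
  intro l
  induction l with
  | nil =>
    intro _ i j
    simp [Matrix.one_apply]
    split <;> simp
  | cons A t ih =>
    intro hmem i j
    have hA : ∀ i, ∑ j, |A i j| ≤ 2 := hmem A List.mem_cons_self
    have ht := ih (fun B hB => hmem B (List.mem_cons_of_mem _ hB))
    rw [List.prod_cons, List.length_cons]
    rw [Matrix.mul_apply]
    calc |∑ k, A i k * t.prod k j| ≤ ∑ k, |A i k * t.prod k j| :=
          Finset.abs_sum_le_sum_abs _ _
      _ ≤ ∑ k, |A i k| * 2 ^ t.length := by
          apply Finset.sum_le_sum
          intro k _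
          rw [abs_mul]
          exact mul_le_mul_of_nonneg_left (ht k j) (abs_nonneg _)
      _ = (∑ k, |A i k|) * 2 ^ t.length := by rw [← Finset.sum_mul]
      _ ≤ 2 * 2 ^ t.length := by
          apply mul_le_mul_of_nonneg_right (hA i) (by positivity)
      _ = 2 ^ (t.length + 1) := by ring

lemma rowsumZ (σ : Fin 2) (i : Fin 3) : ∑ j, |AmatZ σ i j| ≤ 2 := by
  fin_cases σ <;> fin_cases i <;> simp [AmatZ, A0Z, A1Z, Fin.sum_univ_three]

lemma aiz_bound {N : ℕ} (I : Fin N → Fin 2) (i j : Fin 3) : |AIZ I i j| ≤ 2 ^ N := by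
  have := entry_bound (List.ofFn fun i => AmatZ (I i)) (by
    intro A hA i
    rw [List.mem_ofFn] at hA
    obtain ⟨t, rfl⟩ := hA
    exact rowsumZ _ _) i j
  simpa [AIZ] using this

lemma hs_formula (α β : ℝ) (A : Matrix (Fin 3) (Fin 3) ℝ) :
    HS (Mmat α β) A = A 0 2 + α * A 1 2 + β * A 2 2 := by
  simp [HS, Mmat, Matrix.trace, Matrix.mul_apply, Fin.sum_univ_three, Matrix.diag]

set_option maxHeartbeats 1000000 in
theorem k_free_energy_limit_zero (α β : ℝ) (C d : ℝ) (hC : 0 < C) (hd : 2 ≤ d)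
    (h : ∀ p q r : ℤ, Int.gcd p (Int.gcd q r) = 1 →
      1 / (C * (max |(p : ℝ)| (max |(q : ℝ)| |(r : ℝ)|)) ^ d) ≤
        |(p : ℝ) + α * (q : ℝ) + β * (r : ℝ)|) :
    ∀ k : ℝ, 1 < k → ∀ s : ℝ, 2 < s →
      Filter.Tendsto (fun N : ℕ => Real.log (Z N α β s) / (s * (N : ℝ) ^ k))
        Filter.atTop (nhds 0) := by
  intro k hk s hs
  have hs0 : (0:ℝ) < s := by linarith
  have hd0 : (0:ℝ) ≤ d := by linarith
  set K : ℝ := 1 + |α| + |β| with hKdef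
  have hK : (1:ℝ) ≤ K := by
    have := abs_nonneg α; have := abs_nonneg β; simp [hKdef]; linarith
  have hKpos : (0:ℝ) < K := by linarith
  -- per-term bounds on |HS|
  have key : ∀ N : ℕ, ∀ I : Fin N → Fin 2,
      1 / (C * ((2:ℝ)^N) ^ d) ≤ |HS (Mmat α β) (AI I)| ∧
      |HS (Mmat α β) (AI I)| ≤ K * 2 ^ N := by
    intro N I
    obtain ⟨p, q, r, hpe, hqe, hre⟩ :
        ∃ p q r : ℤ, AIZ I 0 2 = p ∧ AIZ I 1 2 = q ∧ AIZ I 2 2 = r := ⟨_, _, _, rfl, rfl, rfl⟩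
    have hgcd : Int.gcd p (Int.gcd q r) = 1 := by
      rw [← hpe, ← hqe, ← hre]; exact gcd_col I
    have hHS : HS (Mmat α β) (AI I) = (p:ℝ) + α * q + β * r := by
      rw [hs_formula, ai_entry, ai_entry, ai_entry, hpe, hqe, hre]
    have hpb : |p| ≤ 2 ^ N := hpe ▸ aiz_bound I 0 2
    have hqb : |q| ≤ 2 ^ N := hqe ▸ aiz_bound I 1 2
    have hrb : |r| ≤ 2 ^ N := hre ▸ aiz_bound I 2 2
    set bR : ℝ := max |(p:ℝ)| (max |(q:ℝ)| |(r:ℝ)|) with hbRdef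
    have hcast : ∀ m : ℤ, |(m:ℝ)| = ((|m| : ℤ) : ℝ) := by intro m; push_cast; ring
    have hbR1 : (1:ℝ) ≤ bR := by
      have hne : ¬(p = 0 ∧ q = 0 ∧ r = 0) := by
        rintro ⟨rfl, rfl, rfl⟩; simp [Int.gcd] at hgcd
      have h1 : (1:ℤ) ≤ |p| ∨ (1:ℤ) ≤ |q| ∨ (1:ℤ) ≤ |r| := by
        by_contra hcon
        push_neg at hcon
        exact hne ⟨Int.abs_lt_one_iff.mp hcon.1, Int.abs_lt_one_iff.mp hcon.2.1,
          Int.abs_lt_one_iff.mp hcon.2.2⟩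
      rcases h1 with h1 | h1 | h1
      · refine le_trans ?_ (le_max_left _ _)
        rw [hcast]; exact_mod_cast h1
      · refine le_trans ?_ (le_trans (le_max_left _ _) (le_max_right _ _))
        rw [hcast]; exact_mod_cast h1
      · refine le_trans ?_ (le_trans (le_max_right _ _) (le_max_right _ _))
        rw [hcast]; exact_mod_cast h1
    have hbR2 : bR ≤ (2:ℝ) ^ N := by
      have h2 : ((2:ℤ)^N : ℝ) = (2:ℝ)^N := by push_cast; ring
      refine max_le ?_ (max_le ?_ ?_) <;> rw [hcast, ← h2]
      · exact_mod_cast hpb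
      · exact_mod_cast hqb
      · exact_mod_cast hrb
    constructor
    · -- lower bound
      rw [hHS]
      refine le_trans ?_ (h p q r hgcd)
      rw [← hbRdef]
      apply one_div_le_one_div_of_le
      · positivity
      · have : bR ^ d ≤ ((2:ℝ)^N) ^ d :=
          Real.rpow_le_rpow (by linarith) hbR2 hd0
        exact mul_le_mul_of_nonneg_left this (le_of_lt hC)
    · -- upper bound
      rw [hHS]
      have e1 : |(p:ℝ)| ≤ (2:ℝ)^N := le_trans (le_max_left _ _) hbR2
      have e2 : |(q:ℝ)| ≤ (2:ℝ)^N := le_trans (le_trans (le_max_left _ _) (le_max_right _ _)) hbR2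
      have e3 : |(r:ℝ)| ≤ (2:ℝ)^N := le_trans (le_trans (le_max_right _ _) (le_max_right _ _)) hbR2
      calc |(p:ℝ) + α * q + β * r| ≤ |(p:ℝ)| + |α * (q:ℝ)| + |β * (r:ℝ)| := by
            exact le_trans (abs_add_le _ _) (by gcongr; exact abs_add_le _ _)
        _ = |(p:ℝ)| + |α| * |(q:ℝ)| + |β| * |(r:ℝ)| := by rw [abs_mul, abs_mul]
        _ ≤ (2:ℝ)^N + |α| * (2:ℝ)^N + |β| * (2:ℝ)^N := by
            nlinarith [mul_le_mul_of_nonneg_left e2 (abs_nonneg α),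
              mul_le_mul_of_nonneg_left e3 (abs_nonneg β), e1]
        _ = K * 2 ^ N := by rw [hKdef]; ring
  -- bounds on Z
  have hB2pos : ∀ N : ℕ, (0:ℝ) < (2:ℝ)^N := fun N => by positivity
  have hZbounds : ∀ N : ℕ,
      (2:ℝ)^N * (1 / (K * 2^N) ^ s) ≤ Z N α β s ∧
      Z N α β s ≤ (2:ℝ)^N * (C * ((2:ℝ)^N) ^ d) ^ s := by
    intro N
    have hLpos : (0:ℝ) < 1 / (C * ((2:ℝ)^N) ^ d) := by positivity
    have hcard : (Fintype.card (Fin N → Fin 2) : ℝ) = (2:ℝ)^N := by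
      simp [Fintype.card_fun]
    constructor
    · calc (2:ℝ)^N * (1 / (K * 2^N) ^ s)
          = ∑ _I : Fin N → Fin 2, (1 / (K * 2^N) ^ s) := by
            rw [Finset.sum_const, nsmul_eq_mul, Finset.card_univ, hcard]
        _ ≤ Z N α β s := by
            apply Finset.sum_le_sum
            intro I _
            have hx := key N I
            have hxpos : 0 < |HS (Mmat α β) (AI I)| := lt_of_lt_of_le hLpos hx.1
            apply one_div_le_one_div_of_le
            · exact Real.rpow_pos_of_pos hxpos s
            · exact Real.rpow_le_rpow (le_of_lt hxpos) hx.2 (le_of_lt hs0)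
    · calc Z N α β s ≤ ∑ _I : Fin N → Fin 2, (C * ((2:ℝ)^N) ^ d) ^ s := by
            apply Finset.sum_le_sum
            intro I _
            have hx := key N I
            have hxpos : 0 < |HS (Mmat α β) (AI I)| := lt_of_lt_of_le hLpos hx.1
            have h1 : (1 / (C * ((2:ℝ)^N) ^ d)) ^ s ≤ |HS (Mmat α β) (AI I)| ^ s :=
              Real.rpow_le_rpow (le_of_lt hLpos) hx.1 (le_of_lt hs0)
            have h2 : 1 / |HS (Mmat α β) (AI I)| ^ s ≤ 1 / (1 / (C * ((2:ℝ)^N) ^ d)) ^ s :=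
              one_div_le_one_div_of_le (Real.rpow_pos_of_pos hLpos s) h1
            refine le_trans h2 (le_of_eq ?_)
            rw [Real.div_rpow (by norm_num) (by positivity), Real.one_rpow, one_div_one_div]
        _ = (2:ℝ)^N * (C * ((2:ℝ)^N) ^ d) ^ s := by
            rw [Finset.sum_const, nsmul_eq_mul, Finset.card_univ, hcard]
  -- positivity of Z
  have hZpos : ∀ N : ℕ, 0 < Z N α β s := by
    intro N
    refine lt_of_lt_of_le ?_ (hZbounds N).1
    have : (0:ℝ) < (K * 2^N) ^ s := Real.rpow_pos_of_pos (by positivity) s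
    positivity
  -- log bounds
  set L2 : ℝ := Real.log 2 with hL2def
  have hL2 : 0 < L2 := Real.log_pos (by norm_num)
  set a : ℝ := s * (|Real.log C| + Real.log K) with hadef
  set b : ℝ := (1 + s * (d + 1)) * L2 with hbdef
  have hlogK : 0 ≤ Real.log K := Real.log_nonneg hK
  have ha : 0 ≤ a := by
    have := abs_nonneg (Real.log C)
    have : 0 ≤ |Real.log C| + Real.log K := by linarith
    positivity
  have hb : 0 ≤ b := by
    have : (0:ℝ) ≤ 1 + s * (d+1) := by nlinarith
    positivity
  have hlogbound : ∀ N : ℕ, |Real.log (Z N α β s)| ≤ a + b * N := by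
    intro N
    obtain ⟨hlow, hup⟩ := hZbounds N
    have hlogup : Real.log (Z N α β s) ≤ N * L2 + s * (Real.log C + d * (N * L2)) := by
      calc Real.log (Z N α β s) ≤ Real.log ((2:ℝ)^N * (C * ((2:ℝ)^N) ^ d) ^ s) :=
            Real.log_le_log (hZpos N) hup
        _ = N * L2 + s * (Real.log C + d * (N * L2)) := by
            rw [Real.log_mul (by positivity) (by positivity)]
            rw [Real.log_pow, Real.log_rpow (by positivity),
              Real.log_mul (ne_of_gt hC) (by positivity),
              Real.log_rpow (by positivity), Real.log_pow]
            try ring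
    have hloglow : N * L2 - s * (Real.log K + N * L2) ≤ Real.log (Z N α β s) := by
      calc N * L2 - s * (Real.log K + N * L2)
          = Real.log ((2:ℝ)^N * (1 / (K * 2^N) ^ s)) := by
            rw [Real.log_mul (by positivity) (by positivity)]
            rw [Real.log_pow, Real.log_div one_ne_zero (by positivity), Real.log_one,
              Real.log_rpow (by positivity), Real.log_mul (ne_of_gt hKpos) (by positivity),
              Real.log_pow]
            try ring
        _ ≤ Real.log (Z N α β s) := Real.log_le_log (by positivity) hlow
    rw [abs_le]
    have hN0 : (0:ℝ) ≤ (N:ℝ) := Nat.cast_nonneg N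
    have hC1 : Real.log C ≤ |Real.log C| := le_abs_self _
    have hC2 : -|Real.log C| ≤ Real.log C := neg_abs_le _
    constructor
    · rw [hadef, hbdef]
      have h1 : 0 ≤ s * ((N:ℝ) * L2) := by positivity
      nlinarith [mul_nonneg (mul_nonneg hs0.le hN0) hL2.le, mul_nonneg hN0 hL2.le]
    · rw [hadef, hbdef]
      nlinarith [mul_nonneg (mul_nonneg hs0.le hN0) hL2.le, mul_nonneg hN0 hL2.le,
        mul_nonneg (mul_nonneg (mul_nonneg hs0.le hd0) hN0) hL2.le]
  -- the squeeze
  have hglim : Tendsto (fun N : ℕ => ((a + b) / s) * ((N:ℝ) ^ (1 - k))) atTop (nhds 0) := by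
    have h1 : Tendsto (fun x : ℝ => x ^ (-(k-1))) atTop (nhds 0) :=
      tendsto_rpow_neg_atTop (by linarith)
    have h2 : Tendsto (fun N : ℕ => ((N:ℝ)) ^ (1-k)) atTop (nhds 0) := by
      have := h1.comp tendsto_natCast_atTop_atTop (α := ℕ)
      convert this using 2 with N
      norm_num
    have := h2.const_mul ((a + b)/s)
    simpa using this
  apply squeeze_zero_norm' _ hglim
  filter_upwards [eventually_ge_atTop 1] with N hN
  have hN1 : (1:ℝ) ≤ (N:ℝ) := by exact_mod_cast hN
  have hNpos : (0:ℝ) < (N:ℝ) := by linarith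
  have hNk : (0:ℝ) < (N:ℝ) ^ k := Real.rpow_pos_of_pos hNpos k
  rw [Real.norm_eq_abs, abs_div, abs_of_pos (by positivity : (0:ℝ) < s * (N:ℝ)^k)]
  rw [div_le_iff₀ (by positivity)]
  have hrw : ((a + b) / s) * ((N:ℝ) ^ (1 - k)) * (s * (N:ℝ)^k) = (a+b) * (N:ℝ) := by
    rw [Real.rpow_sub hNpos, Real.rpow_one]
    field_simp
    try ring
  rw [hrw]
  calc |Real.log (Z N α β s)| ≤ a + b * N := hlogbound N
    _ ≤ (a + b) * N := by nlinarith
end
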